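/- arXiv:1612.02106 — 3 statements merged into one kernel-verified Lean document; each statement's English description precedes it below -/
import Mathlib

section
/- In the category of pointed posets and strict monotone maps, let DX be the set of countably generated order ideals of X ordered by inclusion, with η^D_X(a) = ↓{a} and μ^D_X(𝒜) = ⋃𝒜 for 𝒜 ∈ D²X. Then (D, μ^D, η^D) is a monad: μ ∘ Dμ = μ ∘ μD, μ ∘ Dη = id, and μ ∘ ηD = id. -/
/-- `S` is an ω-ideal relative to the ambient set `U`:
`S ⊆ U` and `S` is the down-closure inside `U` of a countable
nonempty directed set `C ⊆ S`. -/
def IsOmegaIdealIn {α : Type*} [Preorder α] (U : Set α) (S : Set α) : Prop :=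
  S ⊆ U ∧ ∃ C : Set α, C ⊆ S ∧ C.Countable ∧ C.Nonempty ∧ DirectedOn (· ≤ ·) C ∧
    S = {x ∈ U | ∃ c ∈ C, x ≤ c}

/-- `S` is an ω-ideal of `α` (an element of `DX` for `X = α`). -/
def IsOmegaIdeal {α : Type*} [Preorder α] (S : Set α) : Prop :=
  IsOmegaIdealIn Set.univ S

/-- An element of `D²X`: an ω-ideal (w.r.t. inclusion) of the poset `DX`
of ω-ideals of `X`. -/
def IsOmegaIdeal₂ {α : Type*} [Preorder α] (𝒜 : Set (Set α)) : Prop :=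
  IsOmegaIdealIn {I : Set α | IsOmegaIdeal I} 𝒜

/-- An element of `D³X`. -/
def IsOmegaIdeal₃ {α : Type*} [Preorder α] (ℬ : Set (Set (Set α))) : Prop :=
  IsOmegaIdealIn {𝒜 : Set (Set α) | IsOmegaIdeal₂ 𝒜} ℬ

/-- The principal ideal `↓{a}`, i.e. `η^D_X(a)`. -/
def principalIdeal {α : Type*} [Preorder α] (a : α) : Set α := {x | x ≤ a}

/-- ω-ideals are downward closed. -/
lemma IsOmegaIdeal.lower {α : Type*} [Preorder α] {I : Set α} (h : IsOmegaIdeal I)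
    {x y : α} (hx : x ∈ I) (hyx : y ≤ x) : y ∈ I := by
  obtain ⟨-, C, hCI, -, -, -, hrep⟩ := h
  rw [hrep] at hx ⊢
  obtain ⟨-, c, hc, hxc⟩ := hx
  exact ⟨trivial, c, hc, hyx.trans hxc⟩

lemma isOmegaIdeal_principal {α : Type*} [Preorder α] (a : α) :
    IsOmegaIdeal (principalIdeal a) := by
  refine ⟨Set.subset_univ _, {a}, ?_, Set.countable_singleton a, ⟨a, rfl⟩, ?_, ?_⟩
  · intro x hx; exact le_of_eq hx
  · rintro x hx y hy; exact ⟨a, rfl, le_of_eq hx, le_of_eq hy⟩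
  · ext x
    simp [principalIdeal]

lemma mu_wd {α : Type*} [Preorder α] (𝒜 : Set (Set α)) (h : IsOmegaIdeal₂ 𝒜) :
    IsOmegaIdeal (⋃₀ 𝒜) := by
  obtain ⟨hsub, 𝒞, h𝒞𝒜, h𝒞c, h𝒞ne, h𝒞dir, hrep⟩ := h
  -- ⋃₀ 𝒜 = ⋃₀ 𝒞
  have hunion : ⋃₀ 𝒜 = ⋃₀ 𝒞 := by
    apply subset_antisymm
    · rintro x ⟨I, hI, hxI⟩
      have hI' := hI
      rw [hrep] at hI'
      obtain ⟨-, J, hJ, hIJ⟩ := hI'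
      exact ⟨J, hJ, hIJ hxI⟩
    · rintro x ⟨I, hI, hxI⟩
      exact ⟨I, h𝒞𝒜 hI, hxI⟩
  -- choose generating sets for each member of 𝒞
  have hgen : ∀ J ∈ 𝒞, ∃ C : Set α, C ⊆ J ∧ C.Countable ∧ C.Nonempty ∧
      DirectedOn (· ≤ ·) C ∧ J = {x ∈ (Set.univ : Set α) | ∃ c ∈ C, x ≤ c} := by
    intro J hJ
    have : IsOmegaIdeal J := hsub (h𝒞𝒜 hJ)
    exact this.2
  choose! gen hgen1 hgen2 hgen3 hgen4 hgen5 using hgen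
  refine ⟨Set.subset_univ _, ⋃ J ∈ 𝒞, gen J, ?_, ?_, ?_, ?_, ?_⟩
  · -- ⊆ ⋃₀ 𝒜
    rintro x hx
    simp only [Set.mem_iUnion] at hx
    obtain ⟨J, hJ, hxJ⟩ := hx
    exact ⟨J, h𝒞𝒜 hJ, hgen1 J hJ hxJ⟩
  · exact h𝒞c.biUnion (fun J hJ => hgen2 J hJ)
  · obtain ⟨J, hJ⟩ := h𝒞ne
    obtain ⟨c, hc⟩ := hgen3 J hJ
    exact ⟨c, Set.mem_biUnion hJ hc⟩
  · -- directedness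
    rintro c hc c' hc'
    simp only [Set.mem_iUnion] at hc hc'
    obtain ⟨J, hJ, hcJ⟩ := hc
    obtain ⟨J', hJ', hc'J'⟩ := hc'
    obtain ⟨K, hK, hJK, hJ'K⟩ := h𝒞dir J hJ J' hJ'
    -- c, c' ∈ K; use K's representation
    have hcK : c ∈ K := hJK (hgen1 J hJ hcJ)
    have hc'K : c' ∈ K := hJ'K (hgen1 J' hJ' hc'J')
    rw [hgen5 K hK] at hcK hc'K
    obtain ⟨-, d, hd, hcd⟩ := hcK
    obtain ⟨-, d', hd', hc'd'⟩ := hc'K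
    obtain ⟨e, he, hde, hd'e⟩ := hgen4 K hK d hd d' hd'
    exact ⟨e, Set.mem_biUnion hK he, hcd.trans hde, hc'd'.trans hd'e⟩
  · -- representation
    rw [hunion]
    ext x
    simp only [Set.mem_setOf_eq, Set.mem_univ, true_and, Set.mem_iUnion]
    constructor
    · rintro ⟨J, hJ, hxJ⟩
      have := hxJ
      rw [hgen5 J hJ] at this
      obtain ⟨-, c, hc, hxc⟩ := this
      exact ⟨c, ⟨J, hJ, hc⟩, hxc⟩
    · rintro ⟨c, ⟨J, hJ, hc⟩, hxc⟩
      refine ⟨J, hJ, ?_⟩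
      rw [hgen5 J hJ]
      exact ⟨trivial, c, hc, hxc⟩

theorem stmt_8 (X : Type*) [PartialOrder X] [OrderBot X] :
    -- well-definedness of the unit and multiplication
    (∀ a : X, IsOmegaIdeal (principalIdeal a)) ∧
    (∀ 𝒜 : Set (Set X), IsOmegaIdeal₂ 𝒜 → IsOmegaIdeal (⋃₀ 𝒜)) ∧
    -- associativity: `μ ∘ Dμ = μ ∘ μD` on `D³X`
    (∀ ℬ : Set (Set (Set X)), IsOmegaIdeal₃ ℬ →
      ⋃₀ {J : Set X | IsOmegaIdeal J ∧ ∃ 𝒜 ∈ ℬ, J ⊆ ⋃₀ 𝒜} = ⋃₀ (⋃₀ ℬ)) ∧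
    -- right unit: `μ ∘ Dη = id` on `DX`
    (∀ I : Set X, IsOmegaIdeal I →
      ⋃₀ {J : Set X | IsOmegaIdeal J ∧ ∃ a ∈ I, J ⊆ principalIdeal a} = I) ∧
    -- left unit: `μ ∘ ηD = id` on `DX`
    (∀ I : Set X, IsOmegaIdeal I →
      ⋃₀ {J : Set X | IsOmegaIdeal J ∧ J ⊆ I} = I) := by
  refine ⟨isOmegaIdeal_principal, mu_wd, ?_, ?_, ?_⟩
  · -- associativity
    intro ℬ hℬ
    apply subset_antisymm
    · rintro x ⟨J, ⟨-, 𝒜, h𝒜ℬ, hJ⟩, hxJ⟩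
      obtain ⟨I, hI𝒜, hxI⟩ := hJ hxJ
      exact ⟨I, ⟨𝒜, h𝒜ℬ, hI𝒜⟩, hxI⟩
    · rintro x ⟨I, ⟨𝒜, h𝒜ℬ, hI𝒜⟩, hxI⟩
      have h𝒜 : IsOmegaIdeal₂ 𝒜 := hℬ.1 h𝒜ℬ
      have hI : IsOmegaIdeal I := h𝒜.1 hI𝒜
      exact ⟨I, ⟨hI, 𝒜, h𝒜ℬ, Set.subset_sUnion_of_mem hI𝒜⟩, hxI⟩
  · -- right unit
    intro I hI
    apply subset_antisymm
    · rintro x ⟨J, ⟨-, a, haI, hJ⟩, hxJ⟩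
      exact hI.lower haI (hJ hxJ)
    · intro a haI
      exact ⟨principalIdeal a, ⟨isOmegaIdeal_principal a, a, haI, subset_rfl⟩, le_refl a⟩
  · -- left unit
    intro I hI
    apply subset_antisymm
    · rintro x ⟨J, ⟨-, hJI⟩, hxJ⟩
      exact hJI hxJ
    · intro a haI
      refine ⟨principalIdeal a, ⟨isOmegaIdeal_principal a, ?_⟩, le_refl a⟩
      intro y hy
      exact hI.lower haI hy
end

section
/- An Eilenberg–Moore algebra for the ω-ideal monad D on pointed posets is exactly an ω-complete pointed poset: a pointed poset X admits a structure map β : DX → X satisfying the Eilenberg–Moore laws if and only if every countable directed subset of X has a supremum, and in that case β necessarily sends each ω-ideal to its supremum. -/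
/-- An Eilenberg–Moore structure map `β : DX → X` for the ω-ideal monad `D`
(recorded as a function on sets, constrained on ω-ideals): it is a morphism of
pointed posets, `β ∘ η^D_X = id`, and `β ∘ Dβ = β ∘ μ^D_X` (where
`Dβ(𝒜) = ↓(β '' 𝒜) = {x | ∃ I ∈ 𝒜, x ≤ β I}` and `μ^D_X(𝒜) = ⋃𝒜`). -/
def IsEMStructure {X : Type*} [PartialOrder X] [OrderBot X] (β : Set X → X) : Prop :=
  (∀ I J : Set X, IsOmegaIdeal I → IsOmegaIdeal J → I ⊆ J → β I ≤ β J) ∧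
  (∀ a : X, β (principalIdeal a) = a) ∧
  (∀ 𝒜 : Set (Set X), IsOmegaIdeal₂ 𝒜 →
    β {x | ∃ I ∈ 𝒜, x ≤ β I} = β (⋃₀ 𝒜))

lemma em_lub {X : Type*} [PartialOrder X] [OrderBot X] {β : Set X → X}
    (hβ : IsEMStructure β) {I : Set X} (hI : IsOmegaIdeal I) : IsLUB I (β I) := by
  obtain ⟨hmono, hunit, -⟩ := hβ
  obtain ⟨-, C, hCs, -, -, -, hEq⟩ := id hI
  have hdown : ∀ x ∈ I, ∀ y, y ≤ x → y ∈ I := by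
    intro x hx y hy
    rw [hEq] at hx ⊢
    obtain ⟨-, c, hc, hxc⟩ := hx
    exact ⟨trivial, c, hc, hy.trans hxc⟩
  constructor
  · intro x hx
    have h1 : principalIdeal x ⊆ I := fun y hy => hdown x hx y hy
    have := hmono _ _ (isOmegaIdeal_principal x) hI h1
    rwa [hunit x] at this
  · intro u hu
    have h1 : I ⊆ principalIdeal u := fun y hy => hu hy
    have := hmono _ _ hI (isOmegaIdeal_principal u) h1
    rwa [hunit u] at this

section Construct
variable {X : Type*} [PartialOrder X] [OrderBot X]

open Classical in
noncomputable def supFn (S : Set X) : X :=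
  if h : ∃ b, IsLUB S b then h.choose else ⊥

lemma supFn_eq {S : Set X} {b : X} (hb : IsLUB S b) : supFn S = b := by
  have h : ∃ b, IsLUB S b := ⟨b, hb⟩
  rw [supFn]
  rw [dif_pos h]
  exact h.choose_spec.unique hb

lemma ideal_lub (H : ∀ S : Set X, S.Countable → S.Nonempty → DirectedOn (· ≤ ·) S → ∃ b, IsLUB S b) {I : Set X} (hI : IsOmegaIdeal I) : IsLUB I (supFn I) := by
  obtain ⟨-, C, hCs, hcnt, hne, hdir, hEq⟩ := hI
  obtain ⟨b, hb⟩ := H C hcnt hne hdir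
  have hub : upperBounds I = upperBounds C := by
    ext u
    constructor
    · intro hu c hc
      exact hu (hCs hc)
    · intro hu x hx
      rw [hEq] at hx
      obtain ⟨-, c, hc, hxc⟩ := hx
      exact hxc.trans (hu hc)
  have : IsLUB I b := by rw [IsLUB, hub]; exact hb
  rw [supFn_eq this]; exact this

lemma supFn_em (H : ∀ S : Set X, S.Countable → S.Nonempty → DirectedOn (· ≤ ·) S → ∃ b, IsLUB S b) : IsEMStructure (supFn (X := X)) := by
  have hlub : ∀ {I : Set X}, IsOmegaIdeal I → IsLUB I (supFn I) := fun hI => ideal_lub H hI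
  have hmono : ∀ I J : Set X, IsOmegaIdeal I → IsOmegaIdeal J → I ⊆ J →
      supFn I ≤ supFn J := by
    intro I J hI hJ hIJ
    exact (hlub hI).mono (hlub hJ) hIJ
  refine ⟨hmono, fun a => ?_, fun 𝒜 h𝒜 => ?_⟩
  · refine supFn_eq ⟨fun x hx => hx, fun u hu => hu (le_refl a)⟩
  · obtain ⟨hsub, C, hCs, hcnt, hne, hdir, hEq⟩ := h𝒜
    have hidl : ∀ I ∈ 𝒜, IsOmegaIdeal I := fun I hI => hsub hI
    -- D = image of C under supFn
    set D : Set X := supFn '' C with hD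
    have hDcnt : D.Countable := hcnt.image _
    have hDne : D.Nonempty := hne.image _
    have hDdir : DirectedOn (· ≤ ·) D := by
      rintro - ⟨I, hI, rfl⟩ - ⟨J, hJ, rfl⟩
      obtain ⟨K, hK, hIK, hJK⟩ := hdir I hI J hJ
      exact ⟨supFn K, ⟨K, hK, rfl⟩,
        hmono I K (hidl I (hCs hI)) (hidl K (hCs hK)) hIK,
        hmono J K (hidl J (hCs hJ)) (hidl K (hCs hK)) hJK⟩
    obtain ⟨b, hb⟩ := H D hDcnt hDne hDdir
    -- dominate each I ∈ 𝒜 by some J ∈ C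
    have hdom : ∀ I ∈ 𝒜, ∃ J ∈ C, I ⊆ J := by
      intro I hI
      rw [hEq] at hI
      exact hI.2
    -- upper bounds of L equal upper bounds of D
    have hubL : upperBounds {x | ∃ I ∈ 𝒜, x ≤ supFn I} = upperBounds D := by
      ext u
      constructor
      · rintro hu - ⟨J, hJ, rfl⟩
        exact hu ⟨J, hCs hJ, le_rfl⟩
      · rintro hu x ⟨I, hI, hx⟩
        obtain ⟨J, hJ, hIJ⟩ := hdom I hI
        exact hx.trans ((hmono I J (hidl I hI) (hidl J (hCs hJ)) hIJ).trans
          (hu ⟨J, hJ, rfl⟩))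
    have hubU : upperBounds (⋃₀ 𝒜) = upperBounds D := by
      ext u
      constructor
      · rintro hu - ⟨J, hJ, rfl⟩
        exact (hlub (hidl J (hCs hJ))).2 fun x hx => hu ⟨J, hCs hJ, hx⟩
      · rintro hu x ⟨I, hI, hx⟩
        obtain ⟨J, hJ, hIJ⟩ := hdom I hI
        exact ((hlub (hidl J (hCs hJ))).1 (hIJ hx)).trans (hu ⟨J, hJ, rfl⟩)
    have h1 : IsLUB {x | ∃ I ∈ 𝒜, x ≤ supFn I} b := by rw [IsLUB, hubL]; exact hb
    have h2 : IsLUB (⋃₀ 𝒜) b := by rw [IsLUB, hubU]; exact hb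
    rw [supFn_eq h1, supFn_eq h2]

end Construct

/-- An Eilenberg–Moore algebra for the ω-ideal monad `D` on
pointed posets is exactly an ω-complete pointed poset: a structure map
satisfying the Eilenberg–Moore laws exists iff every countable (nonempty)
directed subset has a supremum, and any such structure map necessarily sends
each ω-ideal to its supremum. -/
theorem stmt_9 (X : Type*) [PartialOrder X] [OrderBot X] :
    ((∃ β : Set X → X, IsEMStructure β) ↔
      (∀ S : Set X, S.Countable → S.Nonempty → DirectedOn (· ≤ ·) S →
        ∃ b, IsLUB S b)) ∧
    (∀ β : Set X → X, IsEMStructure β →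
      ∀ I : Set X, IsOmegaIdeal I → IsLUB I (β I)) := by
  constructor
  · constructor
    · rintro ⟨β, hβ⟩ S hcnt hne hdir
      set I : Set X := {x ∈ Set.univ | ∃ c ∈ S, x ≤ c} with hI
      have hIideal : IsOmegaIdeal I := by
        refine ⟨Set.subset_univ _, S, ?_, hcnt, hne, hdir, rfl⟩
        intro c hc
        exact ⟨trivial, c, hc, le_rfl⟩
      have hb := em_lub hβ hIideal
      refine ⟨β I, fun s hs => hb.1 ⟨trivial, s, hs, le_rfl⟩, fun u hu => hb.2 ?_⟩
      rintro x ⟨-, c, hc, hxc⟩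
      exact hxc.trans (hu hc)
    · intro H
      exact ⟨supFn, supFn_em H⟩
  · intro β hβ I hI
    exact em_lub hβ hI
end

section
/- Let A be a Δ-regular algebra with structure map β : FT(A) → A extended to ΔA by β(t) = ⋁{β(s) : s ≪ t}. Then (A, β) is an Eilenberg–Moore algebra for the monad Δ: β(↓{a}-singleton term) = a for a ∈ A, and for any t ∈ Δ(ΔA), β(μ^Δ_A(t)) = β(Δβ(t)). -/
/-- A ranked alphabet (signature): a set of symbols with arities. -/
structure Signature where
  symb : Type
  ar : symb → ℕ

/-- A partial Σ-coterm over `X`: a finite or infinite partial Σ-labeled tree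
whose internal nodes are labeled by operation symbols (with children indexed by
the arity, some possibly missing) and whose leaves may be labeled by variables
from `X`.  It is represented by its (partial) labeling function on tree
positions. -/
structure Coterm (σ : Signature) (X : Type*) where
  label : List ℕ → Option (σ.symb ⊕ X)
  consistent : ∀ p i, (label (p ++ [i])).isSome →
    ∃ f, label p = some (Sum.inl f) ∧ i < σ.ar f

namespace Coterm

variable {σ : Signature} {X Y : Type*}

theorem ext' {s t : Coterm σ X} (h : s.label = t.label) : s = t := by
  cases s; cases t; cases h; rfl

/-- The approximation order: `s ≤ t` iff `s` is obtained from `t` by deleting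
subterms, i.e. `s` agrees with `t` wherever `s` is defined. -/
instance : PartialOrder (Coterm σ X) where
  le s t := ∀ p v, s.label p = some v → t.label p = some v
  le_refl s := fun _ _ h => h
  le_trans s t u h₁ h₂ := fun p v h => h₂ p v (h₁ p v h)
  le_antisymm s t h₁ h₂ := by
    apply ext'; funext p
    cases hs : s.label p with
    | some v => exact (h₁ p v hs).symm
    | none =>
      cases ht : t.label p with
      | some v => exact absurd (h₂ p v ht) (by rw [hs]; simp)
      | none => rfl

/-- The empty term `⊥`. -/
instance : OrderBot (Coterm σ X) where
  bot := ⟨fun _ => none, by intro p i h; simp at h⟩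
  bot_le t := by intro p v h; simp only at h; exact absurd h (by simp)

@[simp] theorem bot_label (p : List ℕ) : (⊥ : Coterm σ X).label p = none := rfl

/-- The coterm consisting of a single variable. -/
def var (x : X) : Coterm σ X where
  label p := if p = [] then some (Sum.inr x) else none
  consistent := by
    intro p i h
    rw [if_neg (by simp)] at h
    simp at h

/-- The labeling function of `node f ts`. -/
def nodeLabel (f : σ.symb) (ts : Fin (σ.ar f) → Coterm σ X) :
    List ℕ → Option (σ.symb ⊕ X)
  | [] => some (Sum.inl f)
  | i :: q => if h : i < σ.ar f then (ts ⟨i, h⟩).label q else none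

/-- The Σ-operations on coterms: `node f ts` is the tree with root label `f`
and children `ts`. -/
def node (f : σ.symb) (ts : Fin (σ.ar f) → Coterm σ X) : Coterm σ X where
  label := nodeLabel f ts
  consistent := by
    intro p i hp
    cases p with
    | nil =>
      refine ⟨f, rfl, ?_⟩
      simp only [List.nil_append, nodeLabel] at hp
      by_contra hlt
      rw [dif_neg hlt] at hp
      simp at hp
    | cons j q =>
      simp only [List.cons_append, nodeLabel] at hp
      by_cases hj : j < σ.ar f
      · rw [dif_pos hj] at hp
        obtain ⟨g, hg, hi⟩ := (ts ⟨j, hj⟩).consistent q i hp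
        exact ⟨g, by simp only [nodeLabel, dif_pos hj]; exact hg, hi⟩
      · rw [dif_neg hj] at hp
        simp at hp

/-- A coterm is finite if it has finitely many positions;
`FT(X)` is the set of finite partial terms. -/
def IsFinite (t : Coterm σ X) : Prop := {p : List ℕ | (t.label p).isSome}.Finite

/-- `s ≪ t`: `s` is finite and is obtained from `t` by deleting subterms. -/
def Ll (s t : Coterm σ X) : Prop := s.IsFinite ∧ s ≤ t

/-- Relabeling of variables along a map `h : X → Y`; this is the unique
ω-continuous algebra morphism `CT(X) → CT(Y)` extending `x ↦ h x` (viewing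
variables of `Y` as coterms), and also gives the functorial action of the
coterm monad. -/
def rename (h : X → Y) (t : Coterm σ X) : Coterm σ Y where
  label p := (t.label p).map (Sum.map id h)
  consistent := by
    intro p i hp
    rw [Option.isSome_map] at hp
    obtain ⟨f, hf, hi⟩ := t.consistent p i hp
    exact ⟨f, by rw [hf]; rfl, hi⟩

end Coterm

/-- `g : CT(X) → CT(Y)` is a morphism of ω-continuous algebras: strict,
monotone, commuting with the Σ-operations, and preserving suprema of countable
directed sets. -/
structure IsOmegaContMorphism {σ : Signature} {X Y : Type*}
    (g : Coterm σ X → Coterm σ Y) : Prop where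
  monotone : Monotone g
  strict : g ⊥ = ⊥
  ops : ∀ (f : σ.symb) (ts : Fin (σ.ar f) → Coterm σ X),
    g (Coterm.node f ts) = Coterm.node f (fun i => g (ts i))
  cont : ∀ S : Set (Coterm σ X), S.Countable → S.Nonempty →
    DirectedOn (· ≤ ·) S → ∀ t, IsLUB S t → IsLUB (g '' S) (g t)

/-- A quasi-regular family: an assignment to each set `X` of an ordered
subalgebra `ΔX` of `CT(X)` containing the variables, such that for every
ω-continuous morphism `h : CT(X) → CT(Y)` with `h(X) ⊆ ΔY` one has
`h(ΔX) ⊆ ΔY`. -/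
structure QuasiRegular (σ : Signature) where
  Del : (X : Type) → Set (Coterm σ X)
  bot_mem : ∀ X : Type, (⊥ : Coterm σ X) ∈ Del X
  var_mem : ∀ (X : Type) (x : X), Coterm.var x ∈ Del X
  op_closed : ∀ (X : Type) (f : σ.symb) (ts : Fin (σ.ar f) → Coterm σ X),
    (∀ i, ts i ∈ Del X) → Coterm.node f ts ∈ Del X
  stable : ∀ (X Y : Type) (g : Coterm σ X → Coterm σ Y),
    IsOmegaContMorphism g → (∀ x : X, g (Coterm.var x) ∈ Del Y) →
    ∀ t ∈ Del X, g t ∈ Del Y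

/-- An ordered Σ-algebra structure on a pointed poset `A`. -/
structure OrderedAlg (σ : Signature) (A : Type*) [PartialOrder A] [OrderBot A] where
  op : ∀ f : σ.symb, (Fin (σ.ar f) → A) → A
  mono : ∀ f (a b : Fin (σ.ar f) → A), (∀ i, a i ≤ b i) → op f a ≤ op f b

/-- `β : FT(A) → A` interprets finite partial terms over `A` in the ordered
algebra `(A, alg)`: it is the structure map of `A` as an Eilenberg–Moore
algebra for the finite partial term monad.  (The value of `β` on non-finite
coterms is irrelevant.) -/
def IsFinInterp {σ : Signature} {A : Type*} [PartialOrder A] [OrderBot A]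
    (alg : OrderedAlg σ A) (β : Coterm σ A → A) : Prop :=
  (β ⊥ = ⊥) ∧
  (∀ a : A, β (Coterm.var a) = a) ∧
  (∀ (f : σ.symb) (ts : Fin (σ.ar f) → Coterm σ A), (∀ i, (ts i).IsFinite) →
    β (Coterm.node f ts) = alg.op f (fun i => β (ts i))) ∧
  (∀ s s' : Coterm σ A, s.IsFinite → s'.IsFinite → s ≤ s' → β s ≤ β s')

/-- A Δ-set in `A` (w.r.t. the interpretation `β`): the set of values of the
finite approximants of some term `t ∈ ΔA`. -/
def IsDelSet {σ : Signature} (Q : QuasiRegular σ) {A : Type} [PartialOrder A]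
    [OrderBot A] (β : Coterm σ A → A) (D : Set A) : Prop :=
  ∃ t ∈ Q.Del A, D = {x : A | ∃ s, Coterm.Ll s t ∧ x = β s}

/-- `A` is a Δ-regular algebra with (extended) structure map `β : ΔA → A`:
`β` interprets finite terms, the supremum of each Δ-set
`{β(s) : s ≪ t}` (for `t ∈ ΔA`) exists and equals `β(t)`
(this is the extension `β(t) = ⋁{β(s) : s ≪ t}`), and the algebraic
operations preserve suprema of Δ-sets. -/
def IsDelStructure {σ : Signature} (Q : QuasiRegular σ) {A : Type}
    [PartialOrder A] [OrderBot A] (alg : OrderedAlg σ A)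
    (β : Coterm σ A → A) : Prop :=
  IsFinInterp alg β ∧
  (∀ t ∈ Q.Del A, IsLUB {x : A | ∃ s, Coterm.Ll s t ∧ x = β s} (β t)) ∧
  (∀ (f : σ.symb) (as : Fin (σ.ar f) → A) (i : Fin (σ.ar f)),
    ∀ t ∈ Q.Del A,
      IsLUB {x : A | ∃ s, Coterm.Ll s t ∧
          x = alg.op f (Function.update as i (β s))}
        (alg.op f (Function.update as i (β t))))

/-- The multiplication (substitution/flattening) of the coterm monad,
characterized as the unique ω-continuous morphism `CT(CT X) → CT X` sending
each variable `s ∈ CT X` to `s` itself. -/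
def IsFlatten {σ : Signature} {X : Type*}
    (flat : Coterm σ (Coterm σ X) → Coterm σ X) : Prop :=
  IsOmegaContMorphism flat ∧ ∀ s : Coterm σ X, flat (Coterm.var s) = s

section Aux

namespace Coterm

variable {σ : Signature} {X Y : Type*}

theorem le_def {s t : Coterm σ X} :
    s ≤ t ↔ ∀ p v, s.label p = some v → t.label p = some v := Iff.rfl

theorem isSome_prefix (t : Coterm σ X) (p q : List ℕ)
    (h : (t.label (p ++ q)).isSome) : (t.label p).isSome := by
  induction q using List.reverseRecOn with
  | nil => simpa using h
  | append_singleton qs i ih =>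
    rw [← List.append_assoc] at h
    obtain ⟨f, hf, -⟩ := t.consistent (p ++ qs) i h
    exact ih (by rw [hf]; rfl)

theorem eq_bot {t : Coterm σ X} (h : t.label [] = none) : t = ⊥ := by
  apply ext'; funext p
  cases hp : t.label p with
  | none => rfl
  | some v =>
    exfalso
    have h1 : (t.label ([] ++ p)).isSome := by simp [hp]
    have h2 := isSome_prefix t [] p h1
    rw [h] at h2; simp at h2

theorem eq_var {t : Coterm σ X} {x : X} (h : t.label [] = some (Sum.inr x)) :
    t = var x := by
  apply ext'; funext p
  cases p with
  | nil => simpa [var] using h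
  | cons i q =>
    show t.label (i :: q) = none
    by_contra hc
    have hs : (t.label ([i] ++ q)).isSome := Option.isSome_iff_ne_none.mpr hc
    have h1 : (t.label [i]).isSome := isSome_prefix t [i] q hs
    obtain ⟨f, hf, -⟩ := t.consistent [] i (by simpa using h1)
    rw [h] at hf; simp at hf

/-- The subterm of `t` rooted at the child position `i`. -/
def child (t : Coterm σ X) (i : ℕ) : Coterm σ X where
  label q := t.label (i :: q)
  consistent := by
    intro p j hp
    have : (t.label ((i :: p) ++ [j])).isSome := by simpa using hp
    exact t.consistent (i :: p) j this

@[simp] theorem child_label (t : Coterm σ X) (i : ℕ) (q : List ℕ) :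
    (t.child i).label q = t.label (i :: q) := rfl

theorem eq_node {t : Coterm σ X} {f : σ.symb} (h : t.label [] = some (Sum.inl f)) :
    t = node f (fun i => t.child i.val) := by
  apply ext'; funext p
  cases p with
  | nil => simpa [node, nodeLabel] using h
  | cons i q =>
    show t.label (i :: q) = nodeLabel f (fun i => t.child i.val) (i :: q)
    simp only [nodeLabel]
    by_cases hi : i < σ.ar f
    · rw [dif_pos hi]; rfl
    · rw [dif_neg hi]
      by_contra hc
      have hs : (t.label ([i] ++ q)).isSome := Option.isSome_iff_ne_none.mpr hc
      have h1 : (t.label [i]).isSome := isSome_prefix t [i] q hs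
      obtain ⟨g, hg, hlt⟩ := t.consistent [] i (by simpa using h1)
      rw [h] at hg
      cases hg
      exact hi hlt

/-- The set of defined positions. -/
def dom (t : Coterm σ X) : Set (List ℕ) := {p | (t.label p).isSome}

theorem isFinite_iff {t : Coterm σ X} : t.IsFinite ↔ t.dom.Finite := Iff.rfl

theorem dom_child (t : Coterm σ X) (i : ℕ) :
    (t.child i).dom = (i :: ·) ⁻¹' t.dom := rfl

theorem child_isFinite {t : Coterm σ X} (ht : t.IsFinite) (i : ℕ) :
    (t.child i).IsFinite := by
  rw [isFinite_iff, dom_child]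
  exact Set.Finite.preimage (fun a _ b _ h => by simpa using h) ht

theorem child_ncard_lt {t : Coterm σ X} (ht : t.IsFinite) {f : σ.symb}
    (h : t.label [] = some (Sum.inl f)) (i : ℕ) :
    (t.child i).dom.ncard < t.dom.ncard := by
  have hinj : Function.Injective (i :: · : List ℕ → List ℕ) := fun a b h => by simpa using h
  have himg : (i :: ·) '' (t.child i).dom ⊆ t.dom \ {[]} := by
    rintro _ ⟨q, hq, rfl⟩
    exact ⟨hq, by simp⟩
  have hfin : t.dom.Finite := ht
  calc (t.child i).dom.ncard = ((i :: ·) '' (t.child i).dom).ncard :=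
        (Set.ncard_image_of_injective _ hinj).symm
    _ ≤ (t.dom \ {[]}).ncard := Set.ncard_le_ncard himg (hfin.subset Set.diff_subset)
    _ < t.dom.ncard := by
        apply Set.ncard_lt_ncard _ hfin
        constructor
        · exact Set.diff_subset
        · intro hsub
          have : ([] : List ℕ) ∈ t.dom := by rw [dom]; simp [h]
          have := hsub this
          simp at this

theorem bot_isFinite : (⊥ : Coterm σ X).IsFinite := by
  have : (⊥ : Coterm σ X).dom = ∅ := by
    ext p; simp [dom]
  rw [isFinite_iff, this]; exact Set.finite_empty

@[simp] theorem var_label (x : X) (p : List ℕ) :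
    (var x : Coterm σ X).label p = if p = [] then some (Sum.inr x) else none := rfl

@[simp] theorem rename_label (h : X → Y) (t : Coterm σ X) (p : List ℕ) :
    (rename h t).label p = (t.label p).map (Sum.map id h) := rfl

theorem rename_bot (h : X → Y) : rename h (⊥ : Coterm σ X) = ⊥ := by
  apply ext'; funext p; rfl

theorem rename_var (h : X → Y) (x : X) :
    rename h (var x : Coterm σ X) = var (h x) := by
  apply ext'; funext p
  by_cases hp : p = [] <;> simp [hp]

theorem rename_node (h : X → Y) (f : σ.symb) (ts : Fin (σ.ar f) → Coterm σ X) :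
    rename h (node f ts) = node f (fun i => rename h (ts i)) := by
  apply ext'; funext p
  cases p with
  | nil => rfl
  | cons i q =>
    show (nodeLabel f ts (i :: q)).map (Sum.map id h) =
      nodeLabel f (fun i => rename h (ts i)) (i :: q)
    simp only [nodeLabel]
    by_cases hi : i < σ.ar f
    · rw [dif_pos hi, dif_pos hi]; rfl
    · rw [dif_neg hi, dif_neg hi]; rfl

theorem rename_mono (h : X → Y) : Monotone (rename h : Coterm σ X → Coterm σ Y) := by
  intro s t hst p v hp
  simp only [rename_label] at hp ⊢
  cases hs : s.label p with
  | none => rw [hs] at hp; simp at hp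
  | some w =>
    rw [hs] at hp
    rw [hst p w hs]
    exact hp

theorem dom_rename (h : X → Y) (t : Coterm σ X) : (rename h t).dom = t.dom := by
  ext p; simp [dom, Option.isSome_map]

theorem rename_isFinite {t : Coterm σ X} (ht : t.IsFinite) (h : X → Y) :
    (rename h t).IsFinite := by
  rw [isFinite_iff, dom_rename]; exact ht

/-- The finite single-branch approximant of `t` keeping only prefixes of `p`. -/
def branch (t : Coterm σ X) (p : List ℕ) : Coterm σ X where
  label q := if q ∈ p.inits then t.label q else none
  consistent := by
    intro q i hq
    by_cases hmem : q ++ [i] ∈ p.inits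
    · rw [if_pos hmem] at hq
      obtain ⟨f, hf, hlt⟩ := t.consistent q i hq
      have hq' : q ∈ p.inits := by
        rw [List.mem_inits] at hmem ⊢
        exact (List.prefix_append q [i]).trans hmem
      refine ⟨f, ?_, hlt⟩
      show (if q ∈ p.inits then t.label q else none) = some (Sum.inl f)
      rw [if_pos hq']; exact hf
    · rw [if_neg hmem] at hq; simp at hq

@[simp] theorem branch_label (t : Coterm σ X) (p q : List ℕ) :
    (branch t p).label q = if q ∈ p.inits then t.label q else none := rfl

theorem branch_le (t : Coterm σ X) (p : List ℕ) : branch t p ≤ t := by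
  intro q v hq
  rw [branch_label] at hq
  by_cases hmem : q ∈ p.inits
  · rw [if_pos hmem] at hq; exact hq
  · rw [if_neg hmem] at hq; simp at hq

theorem branch_isFinite (t : Coterm σ X) (p : List ℕ) : (branch t p).IsFinite := by
  apply Set.Finite.subset (List.finite_toSet p.inits)
  intro q hq
  simp only [dom, Set.mem_setOf_eq, branch_label] at hq
  by_cases hmem : q ∈ p.inits
  · exact hmem
  · rw [if_neg hmem] at hq; simp at hq

theorem branch_label_self (t : Coterm σ X) (p : List ℕ) :
    (branch t p).label p = t.label p := by
  rw [branch_label, if_pos (by rw [List.mem_inits])]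

theorem branch_Ll (t : Coterm σ X) (p : List ℕ) : Ll (branch t p) t :=
  ⟨branch_isFinite t p, branch_le t p⟩

/-- Any LUB is "pointwise attained" on labels. -/
theorem isLUB_label {D : Set (Coterm σ X)} {w : Coterm σ X} (hw : IsLUB D w)
    {p : List ℕ} {v : σ.symb ⊕ X} (hp : w.label p = some v) :
    ∃ d ∈ D, d.label p = some v := by
  by_contra hc
  push_neg at hc
  -- prune w at p
  set w' : Coterm σ X :=
    { label := fun q => if p ∈ q.inits then none else w.label q
      consistent := by
        intro q i hq
        by_cases hmem : p ∈ (q ++ [i]).inits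
        · rw [if_pos hmem] at hq; simp at hq
        · rw [if_neg hmem] at hq
          obtain ⟨f, hf, hlt⟩ := w.consistent q i hq
          have hq' : p ∉ q.inits := by
            intro hcon
            apply hmem
            rw [List.mem_inits] at hcon ⊢
            exact hcon.trans (List.prefix_append q [i])
          refine ⟨f, ?_, hlt⟩
          show (if p ∈ q.inits then none else w.label q) = some (Sum.inl f)
          rw [if_neg hq']; exact hf } with hw'
  have hub : w' ∈ upperBounds D := by
    intro d hd q v' hq
    show (if p ∈ q.inits then none else w.label q) = some v'
    have hqw : w.label q = some v' := hw.1 hd q v' hq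
    rw [if_neg, hqw]
    intro hmem
    rw [List.mem_inits] at hmem
    obtain ⟨r, rfl⟩ := hmem
    have : (d.label p).isSome := isSome_prefix d p r (by rw [hq]; rfl)
    obtain ⟨vp, hvp⟩ := Option.isSome_iff_exists.mp this
    have : w.label p = some vp := hw.1 hd p vp hvp
    rw [hp] at this
    cases this
    exact hc d hd hvp
  have hle : w ≤ w' := hw.2 hub
  have h2 : (if p ∈ p.inits then none else w.label p) = some v := hle p v hp
  rw [if_pos (by rw [List.mem_inits])] at h2
  simp at h2

/-- Finite elements below a LUB of a directed set lie below some member. -/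
theorem le_of_finite_le_lub {D : Set (Coterm σ X)} {w : Coterm σ X}
    (hD : DirectedOn (· ≤ ·) D) (hne : D.Nonempty) (hw : IsLUB D w)
    {s : Coterm σ X} (hs : s.IsFinite) (hsw : s ≤ w) :
    ∃ d ∈ D, s ≤ d := by
  classical
  have key : ∀ F : Finset (Coterm σ X), ↑F ⊆ D → ∃ d ∈ D, ∀ x ∈ F, x ≤ d := by
    intro F
    induction F using Finset.induction_on with
    | empty =>
      intro _
      obtain ⟨d, hd⟩ := hne
      exact ⟨d, hd, by simp⟩
    | @insert a F ha ih =>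
      intro hsub
      rw [Finset.coe_insert, Set.insert_subset_iff] at hsub
      obtain ⟨d, hd, hdub⟩ := ih hsub.2
      obtain ⟨e, he, hae, hde⟩ := hD a hsub.1 d hd
      refine ⟨e, he, ?_⟩
      intro x hx
      rcases Finset.mem_insert.mp hx with rfl | hx
      · exact hae
      · exact (hdub x hx).trans hde
  have hdomfin : s.dom.Finite := hs
  have hwit : ∀ p ∈ s.dom, ∃ d ∈ D, ∀ v, s.label p = some v → d.label p = some v := by
    intro p hp
    obtain ⟨v, hv⟩ := Option.isSome_iff_exists.mp hp
    obtain ⟨d, hd, hdl⟩ := isLUB_label hw (hsw p v hv)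
    exact ⟨d, hd, fun v' hv' => by rw [hv] at hv'; cases hv'; exact hdl⟩
  choose! dd hdd hddl using hwit
  have hsubF : ↑(hdomfin.toFinset.image dd) ⊆ D := by
    intro x hx
    simp only [Finset.coe_image, Set.mem_image, Finset.mem_coe] at hx
    obtain ⟨p, hp, rfl⟩ := hx
    exact hdd p (hdomfin.mem_toFinset.mp hp)
  obtain ⟨d, hd, hdub⟩ := key (hdomfin.toFinset.image dd) hsubF
  refine ⟨d, hd, ?_⟩
  intro p v hv
  have hp : p ∈ s.dom := by rw [dom, Set.mem_setOf_eq, hv]; rfl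
  have h1 : (dd p).label p = some v := hddl p hp v hv
  have h2 : dd p ≤ d := hdub (dd p) (Finset.mem_image_of_mem dd (hdomfin.mem_toFinset.mpr hp))
  exact h2 p v h1

/-- The set of finite approximants. -/
def approx (t : Coterm σ X) : Set (Coterm σ X) := {u | Ll u t}

theorem bot_mem_approx (t : Coterm σ X) : ⊥ ∈ approx t :=
  ⟨bot_isFinite, bot_le⟩

theorem approx_nonempty (t : Coterm σ X) : (approx t).Nonempty :=
  ⟨⊥, bot_mem_approx t⟩

theorem approx_directed (t : Coterm σ X) : DirectedOn (· ≤ ·) (approx t) := by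
  rintro u ⟨hu, hut⟩ u' ⟨hu', hu't⟩
  set w : Coterm σ X :=
    { label := fun p => if (u.label p).isSome then u.label p else u'.label p
      consistent := by
        intro p i hp
        have hlab : ∀ q v, (if (u.label q).isSome then u.label q else u'.label q) = some v →
            t.label q = some v := by
          intro q v hq
          by_cases hq' : (u.label q).isSome
          · rw [if_pos hq'] at hq; exact hut q v hq
          · rw [if_neg hq'] at hq; exact hu't q v hq
        by_cases hcase : (u.label (p ++ [i])).isSome
        · obtain ⟨f, hf, hlt⟩ := u.consistent p i hcase
          refine ⟨f, ?_, hlt⟩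
          show (if (u.label p).isSome then u.label p else u'.label p) = some (Sum.inl f)
          rw [if_pos (by rw [hf]; rfl)]
          exact hf
        · have hp2 : (if (u.label (p ++ [i])).isSome then u.label (p ++ [i])
              else u'.label (p ++ [i])).isSome := hp
          rw [if_neg hcase] at hp2
          obtain ⟨f, hf, hlt⟩ := u'.consistent p i hp2
          refine ⟨f, ?_, hlt⟩
          show (if (u.label p).isSome then u.label p else u'.label p) = some (Sum.inl f)
          by_cases hup : (u.label p).isSome
          · rw [if_pos hup]
            obtain ⟨v, hv⟩ := Option.isSome_iff_exists.mp hup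
            have h1 : t.label p = some v := hut p v hv
            have h2 : t.label p = some (Sum.inl f) := hu't p _ hf
            rw [h1] at h2; cases h2; exact hv
          · rw [if_neg hup]; exact hf } with hwdef
  have hwl : ∀ q v, w.label q = some v → t.label q = some v := by
    intro q v hq
    have hq2 : (if (u.label q).isSome then u.label q else u'.label q) = some v := hq
    by_cases hq' : (u.label q).isSome
    · rw [if_pos hq'] at hq2; exact hut q v hq2
    · rw [if_neg hq'] at hq2; exact hu't q v hq2
  refine ⟨w, ⟨?_, hwl⟩, ?_, ?_⟩
  · -- finite
    apply Set.Finite.subset (Set.Finite.union hu hu')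
    intro p hp
    simp only [dom, Set.mem_setOf_eq] at hp ⊢
    by_cases hq' : (u.label p).isSome
    · exact Or.inl hq'
    · right
      have hp2 : (if (u.label p).isSome then u.label p else u'.label p).isSome := hp
      rw [if_neg hq'] at hp2
      exact hp2
  · intro p v hp
    show (if (u.label p).isSome then u.label p else u'.label p) = some v
    rw [if_pos (by rw [hp]; rfl)]
    exact hp
  · intro p v hp
    show (if (u.label p).isSome then u.label p else u'.label p) = some v
    by_cases hq' : (u.label p).isSome
    · obtain ⟨v', hv'⟩ := Option.isSome_iff_exists.mp hq'
      rw [if_pos hq', hv']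
      have h1 := hut p v' hv'
      have h2 := hu't p v hp
      rw [h1] at h2
      exact h2
    · rw [if_neg hq']; exact hp

theorem approx_countable (t : Coterm σ X) : (approx t).Countable := by
  apply Set.countable_of_injective_of_countable_image (f := dom)
  · rintro u ⟨hu, hut⟩ u' ⟨hu', hu't⟩ hdom
    apply ext'; funext p
    by_cases hp : p ∈ u.dom
    · have hp' : p ∈ u'.dom := hdom ▸ hp
      obtain ⟨v, hv⟩ := Option.isSome_iff_exists.mp hp
      obtain ⟨v', hv'⟩ := Option.isSome_iff_exists.mp hp'
      have h1 := hut p v hv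
      have h2 := hu't p v' hv'
      rw [h1] at h2
      cases h2
      rw [hv, hv']
    · have hp' : p ∉ u'.dom := hdom ▸ hp
      simp only [dom, Set.mem_setOf_eq, Option.isSome_iff_exists, not_exists] at hp hp'
      have h1 : u.label p = none := by
        cases hu0 : u.label p with
        | none => rfl
        | some v => exact absurd hu0 (hp v)
      have h2 : u'.label p = none := by
        cases hu1 : u'.label p with
        | none => rfl
        | some v => exact absurd hu1 (hp' v)
      rw [h1, h2]
  · apply Set.Countable.mono _ (Set.countable_setOf_finite_subset (Set.countable_univ (α := List ℕ)))
    rintro _ ⟨u, ⟨hu, -⟩, rfl⟩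
    exact ⟨hu, Set.subset_univ _⟩

theorem isLUB_approx (t : Coterm σ X) : IsLUB (approx t) t := by
  constructor
  · rintro u ⟨-, hut⟩; exact hut
  · intro b hb p v hp
    have := hb (branch_Ll t p) p v (by rw [branch_label_self]; exact hp)
    exact this

/-- `rename` preserves all LUBs. -/
theorem isLUB_rename (h : X → Y) {D : Set (Coterm σ X)} {w : Coterm σ X}
    (hw : IsLUB D w) : IsLUB (rename h '' D) (rename h w) := by
  constructor
  · rintro _ ⟨d, hd, rfl⟩
    exact rename_mono h (hw.1 hd)
  · intro b hb p v hp
    simp only [rename_label] at hp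
    cases hlab : w.label p with
    | none => rw [hlab] at hp; simp at hp
    | some v0 =>
      rw [hlab] at hp
      obtain ⟨d, hd, hdl⟩ := isLUB_label hw hlab
      have : (rename h d).label p = some v := by
        simp only [rename_label, hdl]
        simpa using hp
      exact hb ⟨d, hd, rfl⟩ p v this

theorem rename_isOmegaCont (h : X → Y) :
    IsOmegaContMorphism (rename h : Coterm σ X → Coterm σ Y) where
  monotone := rename_mono h
  strict := rename_bot h
  ops := rename_node h
  cont := fun S _ _ _ t ht => isLUB_rename h ht

end Coterm

end Aux
section Beta

open Coterm

variable {σ : Signature} {X : Type*} {Q : QuasiRegular σ} {A : Type}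
  [PartialOrder A] [OrderBot A] {alg : OrderedAlg σ A} {β : Coterm σ A → A}

theorem directedOn_image_mono {α β' : Type*} [Preorder α] [Preorder β'] {g : α → β'}
    (hg : Monotone g) {S : Set α} (hS : DirectedOn (· ≤ ·) S) :
    DirectedOn (· ≤ ·) (g '' S) := by
  rintro _ ⟨a, ha, rfl⟩ _ ⟨b, hb, rfl⟩
  obtain ⟨z, hz, haz, hbz⟩ := hS a ha b hb
  exact ⟨g z, ⟨z, hz, rfl⟩, hg haz, hg hbz⟩

theorem Coterm.node_mono {f : σ.symb} {ts ts' : Fin (σ.ar f) → Coterm σ X}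
    (h : ∀ i, ts i ≤ ts' i) : node f ts ≤ node f ts' := by
  intro p v hp
  cases p with
  | nil => exact hp
  | cons i q =>
    show nodeLabel f ts' (i :: q) = some v
    have hp' : nodeLabel f ts (i :: q) = some v := hp
    rw [nodeLabel] at hp' ⊢
    by_cases hi : i < σ.ar f
    · rw [dif_pos hi] at hp' ⊢
      exact h ⟨i, hi⟩ q v hp'
    · rw [dif_neg hi] at hp'; simp at hp'

theorem Coterm.node_isFinite {f : σ.symb} {ts : Fin (σ.ar f) → Coterm σ X}
    (h : ∀ i, (ts i).IsFinite) : (node f ts).IsFinite := by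
  apply Set.Finite.subset
    (Set.Finite.insert ([] : List ℕ)
      (Set.finite_iUnion (fun i : Fin (σ.ar f) => ((h i).image (i.val :: ·)))))
  intro p hp
  cases p with
  | nil => exact Set.mem_insert _ _
  | cons i q =>
    have hp' : (nodeLabel f ts (i :: q)).isSome := hp
    rw [nodeLabel] at hp'
    by_cases hi : i < σ.ar f
    · rw [dif_pos hi] at hp'
      exact Set.mem_insert_of_mem _
        (Set.mem_iUnion.mpr ⟨⟨i, hi⟩, ⟨q, hp', rfl⟩⟩)
    · rw [dif_neg hi] at hp'; simp at hp'

theorem beta_le_of_Ll (hβ : IsDelStructure Q alg β) {s d : Coterm σ A}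
    (hd : d ∈ Q.Del A) (h : Coterm.Ll s d) : β s ≤ β d :=
  (hβ.2.1 d hd).1 ⟨s, h, rfl⟩

theorem beta_mono_del (hβ : IsDelStructure Q alg β) {d d' : Coterm σ A}
    (hd : d ∈ Q.Del A) (hd' : d' ∈ Q.Del A) (h : d ≤ d') : β d ≤ β d' := by
  apply (hβ.2.1 d hd).2
  rintro x ⟨s, hs, rfl⟩
  exact beta_le_of_Ll hβ hd' ⟨hs.1, le_trans hs.2 h⟩

theorem beta_node (hβ : IsDelStructure Q alg β) {f : σ.symb}
    {ds : Fin (σ.ar f) → Coterm σ A} (hds : ∀ i, ds i ∈ Q.Del A) :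
    β (Coterm.node f ds) = alg.op f (fun i => β (ds i)) := by
  have hmem : Coterm.node f ds ∈ Q.Del A := Q.op_closed A f ds hds
  have base : ∀ ss : Fin (σ.ar f) → Coterm σ A, (∀ i, Coterm.Ll (ss i) (ds i)) →
      alg.op f (fun i => β (ss i)) ≤ β (Coterm.node f ds) := by
    intro ss hss
    have hfin : (Coterm.node f ss).IsFinite := Coterm.node_isFinite (fun i => (hss i).1)
    have hle : Coterm.node f ss ≤ Coterm.node f ds := Coterm.node_mono (fun i => (hss i).2)
    have hops : β (Coterm.node f ss) = alg.op f (fun i => β (ss i)) :=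
      hβ.1.2.2.1 f ss (fun i => (hss i).1)
    rw [← hops]
    exact beta_le_of_Ll hβ hmem ⟨hfin, hle⟩
  apply le_antisymm
  · -- upper bound direction
    apply (hβ.2.1 _ hmem).2
    rintro x ⟨s, ⟨hsf, hsle⟩, rfl⟩
    cases hroot : s.label [] with
    | none =>
      rw [Coterm.eq_bot hroot, hβ.1.1]
      exact bot_le
    | some v =>
      have hv : (Coterm.node f ds).label [] = some v := hsle [] v hroot
      have hv' : v = Sum.inl f := by
        have : (Coterm.node f ds).label [] = some (Sum.inl f) := rfl
        rw [this] at hv; exact (Option.some_injective _ hv).symm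
      subst hv'
      have hch : ∀ i : Fin (σ.ar f), Coterm.Ll (s.child i.val) (ds i) := by
        intro i
        refine ⟨Coterm.child_isFinite hsf i.val, ?_⟩
        intro q v hq
        have h2 : (Coterm.node f ds).label (i.val :: q) = some v :=
          hsle (i.val :: q) v hq
        have h3 : nodeLabel f ds (i.val :: q) = some v := h2
        rw [nodeLabel, dif_pos i.isLt] at h3
        simpa using h3
      have hs' : s = Coterm.node f (fun i => s.child i.val) := Coterm.eq_node hroot
      rw [hs', hβ.1.2.2.1 f _ (fun i => Coterm.child_isFinite hsf i.val)]
      apply alg.mono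
      intro i
      exact beta_le_of_Ll hβ (hds i) (hch i)
  · -- continuity direction, freeing one coordinate at a time
    have step : ∀ j k, σ.ar f ≤ k + j → ∀ ss : Fin (σ.ar f) → Coterm σ A,
        (∀ i : Fin (σ.ar f), i.val < k → Coterm.Ll (ss i) (ds i)) →
        (∀ i : Fin (σ.ar f), k ≤ i.val → ss i = ds i) →
        alg.op f (fun i => β (ss i)) ≤ β (Coterm.node f ds) := by
      intro j
      induction j with
      | zero =>
        intro k hk ss h1 _
        exact base ss (fun i => h1 i (lt_of_lt_of_le i.isLt (by simpa using hk)))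
      | succ j ih =>
        intro k hk ss h1 h2
        by_cases hkar : σ.ar f ≤ k
        · exact base ss (fun i => h1 i (lt_of_lt_of_le i.isLt hkar))
        · push_neg at hkar
          set i₀ : Fin (σ.ar f) := ⟨k, hkar⟩ with hi₀
          have hss0 : ss i₀ = ds i₀ := h2 i₀ (le_refl k)
          have hlub := hβ.2.2 f (fun i => β (ss i)) i₀ (ds i₀) (hds i₀)
          have heq : Function.update (fun i => β (ss i)) i₀ (β (ds i₀)) =
              fun i => β (ss i) := by
            funext i
            by_cases hi : i = i₀
            · subst hi; rw [Function.update_self, hss0]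
            · rw [Function.update_of_ne hi]
          rw [heq] at hlub
          apply hlub.2
          rintro x ⟨s, hsLl, rfl⟩
          have hupdate : Function.update (fun i => β (ss i)) i₀ (β s) =
              fun i => β (Function.update ss i₀ s i) := by
            funext i
            by_cases hi : i = i₀
            · subst hi; rw [Function.update_self, Function.update_self]
            · rw [Function.update_of_ne hi, Function.update_of_ne hi]
          rw [hupdate]
          apply ih (k + 1) (by omega)
          · intro i hik
            by_cases hi : i = i₀
            · subst hi; rw [Function.update_self]; exact hsLl
            · rw [Function.update_of_ne hi]
              apply h1 i
              have hne : i.val ≠ k := fun hc => hi (Fin.ext hc)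
              omega
          · intro i hik
            have hi : i ≠ i₀ := by
              intro hc; subst hc
              simp only [hi₀] at hik
              omega
            rw [Function.update_of_ne hi]
            exact h2 i (by omega)
    exact step (σ.ar f) 0 (by omega) ds (fun i hi => absurd hi (by omega)) (fun i _ => rfl)

end Beta
section Main

open Coterm

variable {σ : Signature} {X Y : Type*}

/-- Restriction of `t` to the domain of `s`. -/
def Coterm.restrict (t : Coterm σ X) (s : Coterm σ Y) : Coterm σ X where
  label p := if (s.label p).isSome then t.label p else none
  consistent := by
    intro p i hp
    have hp2 : (if (s.label (p ++ [i])).isSome then t.label (p ++ [i]) else none).isSome :=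
      hp
    have hsp : (s.label (p ++ [i])).isSome := by
      by_contra hc
      rw [if_neg hc] at hp2; simp at hp2
    rw [if_pos hsp] at hp2
    rename' hp2 => hp
    obtain ⟨f, hf, hlt⟩ := t.consistent p i hp
    refine ⟨f, ?_, hlt⟩
    show (if (s.label p).isSome then t.label p else none) = some (Sum.inl f)
    rw [if_pos (Coterm.isSome_prefix s p [i] hsp)]
    exact hf

@[simp] theorem Coterm.restrict_label (t : Coterm σ X) (s : Coterm σ Y) (p : List ℕ) :
    (t.restrict s).label p = if (s.label p).isSome then t.label p else none := rfl

theorem Coterm.restrict_le (t : Coterm σ X) (s : Coterm σ Y) : t.restrict s ≤ t := by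
  intro p v hp
  rw [restrict_label] at hp
  by_cases hc : (s.label p).isSome
  · rw [if_pos hc] at hp; exact hp
  · rw [if_neg hc] at hp; simp at hp

theorem Coterm.restrict_isFinite (t : Coterm σ X) {s : Coterm σ Y} (hs : s.IsFinite) :
    (t.restrict s).IsFinite := by
  apply Set.Finite.subset hs
  intro p hp
  have hp' : (if (s.label p).isSome then t.label p else none).isSome = true := hp
  by_cases hc : (s.label p).isSome
  · exact hc
  · rw [if_neg hc] at hp'; simp at hp'

theorem Coterm.le_rename_restrict {t : Coterm σ X} {s : Coterm σ Y} {h : X → Y}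
    (hle : s ≤ Coterm.rename h t) : s ≤ Coterm.rename h (t.restrict s) := by
  intro p v hp
  have hsome : (s.label p).isSome := by rw [hp]; rfl
  have h1 : (Coterm.rename h t).label p = some v := hle p v hp
  show ((t.restrict s).label p).map (Sum.map id h) = some v
  rw [restrict_label, if_pos hsome]
  exact h1

variable {Q : QuasiRegular σ} {A : Type} [PartialOrder A] [OrderBot A]
  {alg : OrderedAlg σ A} {β : Coterm σ A → A}
  {flat : Coterm σ (Coterm σ A) → Coterm σ A}

theorem main_fin (hβ : IsDelStructure Q alg β) (hflat : IsFlatten flat) :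
    ∀ (n : ℕ) (u : Coterm σ {s : Coterm σ A // s ∈ Q.Del A}), u.IsFinite →
      u.dom.ncard = n →
      flat (Coterm.rename Subtype.val u) ∈ Q.Del A ∧
      β (Coterm.rename (fun s => β s.1) u) = β (flat (Coterm.rename Subtype.val u)) := by
  intro n
  induction n using Nat.strong_induction_on with
  | _ n ih =>
    intro u hu hcard
    cases hroot : u.label [] with
    | none =>
      have hb := Coterm.eq_bot hroot
      subst hb
      constructor
      · rw [Coterm.rename_bot, hflat.1.strict]; exact Q.bot_mem A
      · rw [Coterm.rename_bot, Coterm.rename_bot, hflat.1.strict]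
    | some v =>
      cases v with
      | inr x =>
        have hv := Coterm.eq_var hroot
        subst hv
        constructor
        · rw [Coterm.rename_var, hflat.2]; exact x.2
        · rw [Coterm.rename_var, Coterm.rename_var, hflat.2, hβ.1.2.1]
      | inl f =>
        have hnode := Coterm.eq_node hroot
        have hch : ∀ i : Fin (σ.ar f), (u.child i.val).IsFinite :=
          fun i => Coterm.child_isFinite hu i.val
        have hchcard : ∀ i : Fin (σ.ar f), (u.child i.val).dom.ncard < n :=
          fun i => hcard ▸ Coterm.child_ncard_lt hu hroot i.val
        have IH := fun i : Fin (σ.ar f) =>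
          ih _ (hchcard i) (u.child i.val) (hch i) rfl
        constructor
        · rw [hnode, Coterm.rename_node, hflat.1.ops]
          exact Q.op_closed A f _ (fun i => (IH i).1)
        · rw [hnode, Coterm.rename_node, Coterm.rename_node, hflat.1.ops]
          rw [hβ.1.2.2.1 f _ (fun i => Coterm.rename_isFinite (hch i) _)]
          rw [beta_node hβ (fun i => (IH i).1)]
          congr 1
          funext i
          exact (IH i).2

end Main
/-- Let `A` be a Δ-regular algebra with structure map
`β : FT(A) → A` extended to `ΔA` by `β(t) = ⋁{β(s) : s ≪ t}`.  Then `(A, β)`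
is an Eilenberg–Moore algebra for the monad `Δ`: `β(x) = x` on variables, and
`β ∘ μ^Δ_A = β ∘ Δβ` on `Δ(ΔA)` (where `ΔA` is encoded as the subtype of
coterms lying in `Q.Del A`, `μ^Δ` is the flattening of the coterm monad, and
`Δβ` is relabeling of variables by `β`). -/
theorem stmt_11 (σ : Signature) (Q : QuasiRegular σ) (A : Type)
    [PartialOrder A] [OrderBot A] (alg : OrderedAlg σ A)
    (β : Coterm σ A → A) (hβ : IsDelStructure Q alg β)
    (flat : Coterm σ (Coterm σ A) → Coterm σ A) (hflat : IsFlatten flat) :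
    (∀ a : A, β (Coterm.var a) = a) ∧
    (∀ t : Coterm σ {s : Coterm σ A // s ∈ Q.Del A},
      t ∈ Q.Del {s : Coterm σ A // s ∈ Q.Del A} →
      β (flat (Coterm.rename Subtype.val t)) =
        β (Coterm.rename (fun s => β s.1) t)) := by

  obtain ⟨hflatm, hflatvar⟩ := hflat
  refine ⟨hβ.1.2.1, ?_⟩
  intro t ht
  set g1 : Coterm σ {s : Coterm σ A // s ∈ Q.Del A} → Coterm σ A :=
    fun u => flat (Coterm.rename Subtype.val u) with hg1def
  have hg1 : IsOmegaContMorphism g1 := by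
    refine ⟨?_, ?_, ?_, ?_⟩
    · exact fun s t h => hflatm.monotone (Coterm.rename_mono _ h)
    · show flat (Coterm.rename _ ⊥) = ⊥
      rw [Coterm.rename_bot]; exact hflatm.strict
    · intro f ts
      show flat (Coterm.rename _ (Coterm.node f ts)) = _
      rw [Coterm.rename_node, hflatm.ops]
    · intro S hc hne hdir u hu
      have h1 := Coterm.isLUB_rename Subtype.val hu
      have h2 := hflatm.cont _ (hc.image _) (hne.image _)
        (directedOn_image_mono (Coterm.rename_mono _) hdir) _ h1
      rw [Set.image_image] at h2
      exact h2
  have hw1 : g1 t ∈ Q.Del A := by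
    refine Q.stable _ _ g1 hg1 (fun s => ?_) t ht
    show flat (Coterm.rename _ (Coterm.var s)) ∈ _
    rw [Coterm.rename_var, hflatvar]
    exact s.2
  have hw2 : Coterm.rename (fun s : {s : Coterm σ A // s ∈ Q.Del A} => β s.1) t ∈ Q.Del A := by
    refine Q.stable _ _ _ (Coterm.rename_isOmegaCont _) (fun s => ?_) t ht
    rw [Coterm.rename_var]
    exact Q.var_mem A _
  have hlub1 : IsLUB (g1 '' Coterm.approx t) (g1 t) := by
    have h1 := Coterm.isLUB_rename Subtype.val (Coterm.isLUB_approx t)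
    have h2 := hflatm.cont _ ((Coterm.approx_countable t).image _)
      ((Coterm.approx_nonempty t).image _)
      (directedOn_image_mono (Coterm.rename_mono _) (Coterm.approx_directed t)) _ h1
    rw [Set.image_image] at h2
    exact h2
  have hg1mono : Monotone g1 := hg1.monotone
  have hdir2 : DirectedOn (· ≤ ·) (g1 '' Coterm.approx t) :=
    directedOn_image_mono hg1mono (Coterm.approx_directed t)
  apply le_antisymm
  · apply (hβ.2.1 _ hw1).2
    rintro x ⟨s, ⟨hsf, hsle⟩, rfl⟩
    obtain ⟨d, ⟨u, hu, rfl⟩, hsd⟩ := Coterm.le_of_finite_le_lub hdir2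
      ((Coterm.approx_nonempty t).image _) hlub1 hsf hsle
    have hmain := main_fin hβ ⟨hflatm, hflatvar⟩ u.dom.ncard u hu.1 rfl
    calc β s ≤ β (g1 u) := beta_le_of_Ll hβ hmain.1 ⟨hsf, hsd⟩
      _ = β (Coterm.rename (fun s => β s.1) u) := hmain.2.symm
      _ ≤ β (Coterm.rename (fun s => β s.1) t) :=
          beta_le_of_Ll hβ hw2 ⟨Coterm.rename_isFinite hu.1 _, Coterm.rename_mono _ hu.2⟩
  · apply (hβ.2.1 _ hw2).2
    rintro x ⟨s, ⟨hsf, hsle⟩, rfl⟩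
    have hu : Coterm.Ll (t.restrict s) t := ⟨Coterm.restrict_isFinite t hsf, Coterm.restrict_le t s⟩
    have hs2 : s ≤ Coterm.rename (fun s => β s.1) (t.restrict s) :=
      Coterm.le_rename_restrict hsle
    have hmain := main_fin hβ ⟨hflatm, hflatvar⟩ (t.restrict s).dom.ncard (t.restrict s) hu.1 rfl
    calc β s ≤ β (Coterm.rename (fun s => β s.1) (t.restrict s)) :=
          hβ.1.2.2.2 s _ hsf (Coterm.rename_isFinite hu.1 _) hs2
      _ = β (g1 (t.restrict s)) := hmain.2
      _ ≤ β (g1 t) := beta_mono_del hβ hmain.1 hw1 (hg1mono hu.2)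
end
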